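/- Let K be a field, k ≥ 1, and n = 2k. If there exists a field extension F of K with [F : K] = k (i.e., F is a field that is a K-algebra of dimension k over K), then there exists a K-subspace C ≤ U^n(K) with dim_K(C) = k such that every nonzero Δ ∈ C satisfies frk(Δ) = k(k+1). -/

import Mathlib

/-- The space `U^n(K)` of upper triangular `n × n` matrices over `K`,
as a `K`-subspace of the matrix space. -/
def UT (K : Type*) [Field K] (n : ℕ) : Submodule K (Matrix (Fin n) (Fin n) K) where
  carrier := {A | ∀ i j : Fin n, (j : ℕ) < (i : ℕ) → A i j = 0}
  add_mem' := by
    intro a b ha hb i j h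
    simp [Matrix.add_apply, ha i j h, hb i j h]
  zero_mem' := by
    intro i j h
    simp
  smul_mem' := by
    intro c a ha i j h
    simp [Matrix.smul_apply, ha i j h]

/-- For `Δ ∈ U^n(K)` and `i : Fin n` (representing the 1-indexed value `i+1`),
the upper-right corner submatrix `Δ_[i+1] ∈ K^{(i+1) × (n+1-(i+1))}`,
consisting of the entries `Δ_{k,ℓ}` with (1-indexed) `1 ≤ k ≤ i+1`, `i+1 ≤ ℓ ≤ n`. -/
def corner {K : Type*} [Field K] {n : ℕ} (Δ : Matrix (Fin n) (Fin n) K) (i : Fin n) :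
    Matrix (Fin ((i : ℕ) + 1)) (Fin (n + 1 - ((i : ℕ) + 1))) K :=
  Matrix.of fun k l =>
    Δ ⟨k, by have := k.isLt; have := i.isLt; omega⟩
      ⟨(i : ℕ) + l, by have := l.isLt; have := i.isLt; omega⟩

/-- The flag rank of an upper triangular matrix: the sum of the ranks of its
upper-right corner submatrices, `frk Δ = Σ_{i=1}^{n} rank Δ_[i]`. -/
noncomputable def frk {K : Type*} [Field K] {n : ℕ} (Δ : Matrix (Fin n) (Fin n) K) : ℕ :=
  ∑ i : Fin n, (corner Δ i).rank

open Matrix Finset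

section Aux
variable {K : Type*} [Field K]

/-- Embedding of `k × k` matrices into the top-right corner of `2k × 2k` matrices. -/
def embTR (K : Type*) [Field K] (k : ℕ) :
    Matrix (Fin k) (Fin k) K →ₗ[K] Matrix (Fin (2*k)) (Fin (2*k)) K where
  toFun M := Matrix.of fun i j =>
    if h : (i:ℕ) < k ∧ k ≤ (j:ℕ) then M ⟨i, h.1⟩ ⟨(j:ℕ) - k, by have := j.isLt; omega⟩ else 0
  map_add' M N := by
    ext i j
    by_cases h : (i:ℕ) < k ∧ k ≤ (j:ℕ) <;> simp [h]
  map_smul' c M := by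
    ext i j
    by_cases h : (i:ℕ) < k ∧ k ≤ (j:ℕ) <;> simp [h]

lemma embTR_apply (k : ℕ) (M : Matrix (Fin k) (Fin k) K) (i j : Fin (2*k)) :
    embTR K k M i j =
      if h : (i:ℕ) < k ∧ k ≤ (j:ℕ) then M ⟨i, h.1⟩ ⟨(j:ℕ) - k, by have := j.isLt; omega⟩
      else 0 := rfl

lemma embTR_injective (k : ℕ) : Function.Injective (embTR K k) := by
  intro M N h
  ext a b
  have h2 : embTR K k M ⟨a, by omega⟩ ⟨(b:ℕ) + k, by omega⟩
      = embTR K k N ⟨a, by omega⟩ ⟨(b:ℕ) + k, by omega⟩ := by rw [h]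
  simpa [embTR_apply, show (a:ℕ) < k ∧ k ≤ (b:ℕ) + k from ⟨a.isLt, by omega⟩,
    Fin.ext_iff] using h2

/-- A total (ℕ-indexed) version of a `k × k` matrix, extended by zero. -/
noncomputable def ext2 (k : ℕ) (M : Matrix (Fin k) (Fin k) K) : ℕ → ℕ → K :=
  fun r l => if h : r < k ∧ l < k then M ⟨r, h.1⟩ ⟨l, h.2⟩ else 0

lemma ext2_apply (k : ℕ) (M : Matrix (Fin k) (Fin k) K) (r l : Fin k) :
    ext2 k M r l = M r l := by
  simp only [ext2, dif_pos (show (r:ℕ) < k ∧ (l:ℕ) < k from ⟨r.isLt, l.isLt⟩)]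

/-- A total (ℕ-indexed) version of a vector, extended by zero. -/
noncomputable def ext1 {a : ℕ} (d : Fin a → K) : ℕ → K :=
  fun j => if h : j < a then d ⟨j, h⟩ else 0

lemma ext1_apply {a : ℕ} (d : Fin a → K) (j : Fin a) : ext1 d j = d j := by
  simp only [ext1, dif_pos j.isLt]

/-- rank of the `i`-th corner of the embedded matrix, when `M` is invertible. -/
lemma corner_embTR_rank (k : ℕ) (M : Matrix (Fin k) (Fin k) K) (hM : IsUnit M)
    (i : Fin (2*k)) :
    (corner (embTR K k M) i).rank = min ((i:ℕ) + 1) (2*k - (i:ℕ)) := by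
  set v : ℕ := (i : ℕ) with hv
  have hvlt : v < 2*k := i.isLt
  set B := corner (embTR K k M) i with hB
  have hBent : ∀ (r : Fin (v+1)) (l : Fin (2*k+1-(v+1))),
      B r l = if (r:ℕ) < k ∧ k ≤ v + (l:ℕ) then ext2 k M r (v + (l:ℕ) - k) else 0 := by
    intro r l
    have hlk : v + (l:ℕ) < 2*k := by have := l.isLt; omega
    simp only [hB, corner, Matrix.of_apply, embTR_apply]
    by_cases h : (r:ℕ) < k ∧ k ≤ v + (l:ℕ)
    · rw [dif_pos h, if_pos h, ext2, dif_pos (show (r:ℕ) < k ∧ v + (l:ℕ) - k < k from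
        ⟨h.1, by omega⟩)]
    · rw [dif_neg h, if_neg h]
  rcases Nat.lt_or_ge v k with hcase | hcase
  · -- v < k : mulVecLin is surjective, rank = v + 1
    have hsurj : Function.Surjective B.mulVecLin := by
      intro y
      obtain ⟨d, hd⟩ := (Matrix.mulVec_surjective_iff_isUnit.mpr hM)
        (fun j : Fin k => ext1 y j)
      refine ⟨fun l => if k ≤ v + (l:ℕ) then ext1 d (v + (l:ℕ) - k) else 0, ?_⟩
      funext r
      have hrk : (r:ℕ) < k := by have := r.isLt; omega
      simp only [Matrix.mulVecLin_apply, Matrix.mulVec, dotProduct]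
      have step1 : ∀ l : Fin (2*k+1-(v+1)),
          B r l * (if k ≤ v + (l:ℕ) then ext1 d (v + (l:ℕ) - k) else 0)
          = if k ≤ v + (l:ℕ) then ext2 k M r (v + (l:ℕ) - k) * ext1 d (v + (l:ℕ) - k)
            else 0 := by
        intro l
        rw [hBent]
        by_cases h : k ≤ v + (l:ℕ)
        · rw [if_pos h, if_pos h, if_pos ⟨hrk, h⟩]
        · rw [if_neg h, if_neg h, if_neg (fun hh => h hh.2), zero_mul]
      rw [Finset.sum_congr rfl (fun l _ => step1 l)]
      have key : ∑ l : Fin (2*k+1-(v+1)),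
          (if k ≤ v + (l:ℕ) then ext2 k M r (v + (l:ℕ) - k) * ext1 d (v + (l:ℕ) - k) else 0)
          = ∑ j : Fin k, ext2 k M r j * ext1 d j := by
        refine (Fintype.sum_of_injective
          (fun j : Fin k => (⟨(j:ℕ) + (k - v), by have := j.isLt; omega⟩
            : Fin (2*k+1-(v+1))))
          (fun a b hab => by
            have : (a:ℕ) + (k - v) = (b:ℕ) + (k - v) := congrArg Fin.val hab
            exact Fin.ext (by omega)) _ _ ?_ ?_).symm
        · intro l hl
          by_cases h : k ≤ v + (l:ℕ)
          · exfalso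
            refine hl ⟨⟨v + (l:ℕ) - k, by have := l.isLt; omega⟩, Fin.ext ?_⟩
            show v + (l:ℕ) - k + (k - v) = (l:ℕ)
            omega
          · rw [if_neg h]
        · intro j
          show ext2 k M r (j:ℕ) * ext1 d (j:ℕ)
            = if k ≤ v + ((j:ℕ) + (k - v)) then ext2 k M r (v + ((j:ℕ) + (k - v)) - k)
                * ext1 d (v + ((j:ℕ) + (k - v)) - k) else 0
          rw [if_pos (by omega), show v + ((j:ℕ) + (k - v)) - k = (j:ℕ) by omega]
      rw [key]
      have key2 : ∑ j : Fin k, ext2 k M r j * ext1 d j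
          = ∑ j : Fin k, M ⟨(r:ℕ), hrk⟩ j * d j := by
        refine Finset.sum_congr rfl fun j _ => ?_
        rw [ext1_apply]
        congr 1
        rw [show ext2 k M r j = ext2 k M ((⟨(r:ℕ), hrk⟩ : Fin k) : ℕ) ((j : Fin k) : ℕ) from rfl,
          ext2_apply]
      rw [key2]
      have hmd : (M *ᵥ d) ⟨(r:ℕ), hrk⟩ = y r := by
        rw [hd]
        show ext1 y ((⟨(r:ℕ), hrk⟩ : Fin k) : ℕ) = y r
        simp only [ext1, dif_pos (show (r:ℕ) < v + 1 from r.isLt)]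
        exact dif_pos r.isLt
      simpa only [Matrix.mulVec, dotProduct] using hmd
    have hrange : LinearMap.range B.mulVecLin = ⊤ := LinearMap.range_eq_top.mpr hsurj
    rw [Matrix.rank, hrange, finrank_top, Module.finrank_fin_fun]
    omega
  · -- k ≤ v : mulVecLin is injective, rank = 2k - v
    have hinjM : Function.Injective M.mulVec := Matrix.mulVec_injective_iff_isUnit.mpr hM
    have hinj : Function.Injective B.mulVecLin := by
      rw [injective_iff_map_eq_zero]
      intro c hc
      set d : Fin k → K := fun j => if v ≤ (j:ℕ) + k then ext1 c ((j:ℕ) + k - v) else 0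
        with hdd
      have hMd : M *ᵥ d = 0 := by
        funext r
        have hrv : (r:ℕ) < v + 1 := by have := r.isLt; omega
        have step1 : ∀ j : Fin k, M r j * d j
            = if v ≤ (j:ℕ) + k then ext2 k M r ((j:ℕ)) * ext1 c ((j:ℕ) + k - v) else 0 := by
          intro j
          have hdj : d j = if v ≤ (j:ℕ) + k then ext1 c ((j:ℕ) + k - v) else 0 := rfl
          rw [hdj]
          by_cases h : v ≤ (j:ℕ) + k
          · rw [if_pos h, if_pos h]
            congr 1
            rw [show ext2 k M ((r : Fin k):ℕ) ((j : Fin k):ℕ) = M r j from ext2_apply k M r j]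
          · rw [if_neg h, if_neg h, mul_zero]
        have key : ∑ j : Fin k, (if v ≤ (j:ℕ) + k then ext2 k M r ((j:ℕ))
              * ext1 c ((j:ℕ) + k - v) else 0)
            = ∑ l : Fin (2*k+1-(v+1)), ext2 k M r (v + (l:ℕ) - k) * ext1 c l := by
          refine (Fintype.sum_of_injective
            (fun l : Fin (2*k+1-(v+1)) => (⟨v + (l:ℕ) - k, by have := l.isLt; omega⟩ : Fin k))
            (fun a b hab => by
              have h1 : v + (a:ℕ) - k = v + (b:ℕ) - k := congrArg Fin.val hab
              have := a.isLt; have := b.isLt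
              exact Fin.ext (by omega)) _ _ ?_ ?_).symm
          · intro j hj
            by_cases h : v ≤ (j:ℕ) + k
            · exfalso
              refine hj ⟨⟨(j:ℕ) + k - v, by have := j.isLt; omega⟩, Fin.ext ?_⟩
              show v + ((j:ℕ) + k - v) - k = (j:ℕ)
              omega
            · rw [if_neg h]
          · intro l
            show ext2 k M r (v + (l:ℕ) - k) * ext1 c (l:ℕ)
              = if v ≤ (v + (l:ℕ) - k) + k then ext2 k M r (v + (l:ℕ) - k)
                  * ext1 c ((v + (l:ℕ) - k) + k - v) else 0
            have := l.isLt
            rw [if_pos (by omega), show (v + (l:ℕ) - k) + k - v = (l:ℕ) by omega]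
        have hzero : ∑ l : Fin (2*k+1-(v+1)), B ⟨(r:ℕ), hrv⟩ l * c l = 0 := by
          have := congrFun hc ⟨(r:ℕ), hrv⟩
          simpa only [Matrix.mulVecLin_apply, Matrix.mulVec, dotProduct,
            Pi.zero_apply] using this
        have step2 : ∀ l : Fin (2*k+1-(v+1)),
            B ⟨(r:ℕ), hrv⟩ l * c l = ext2 k M r (v + (l:ℕ) - k) * ext1 c l := by
          intro l
          rw [hBent, if_pos (show ((⟨(r:ℕ), hrv⟩ : Fin (v+1)):ℕ) < k ∧ k ≤ v + (l:ℕ)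
            from ⟨r.isLt, by omega⟩), ext1_apply]
        show (fun x => ∑ j : Fin k, M x j * d j) r = (0 : Fin k → K) r
        simp only [Pi.zero_apply]
        rw [Finset.sum_congr rfl (fun j _ => step1 j), key,
          ← Finset.sum_congr rfl (fun l _ => step2 l)]
        exact hzero
      have hd0 : d = 0 := hinjM (by rw [hMd, Matrix.mulVec_zero])
      funext l
      have hlb := l.isLt
      have h1 : (if v ≤ ((⟨v + (l:ℕ) - k, by omega⟩ : Fin k):ℕ) + k
          then ext1 c (((⟨v + (l:ℕ) - k, by omega⟩ : Fin k):ℕ) + k - v) else 0) = 0 := by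
        exact congrFun hd0 ⟨v + (l:ℕ) - k, by omega⟩
      rw [if_pos (show v ≤ ((⟨v + (l:ℕ) - k, by omega⟩ : Fin k):ℕ) + k by
        show v ≤ (v + (l:ℕ) - k) + k; omega)] at h1
      have h2 : ((⟨v + (l:ℕ) - k, by omega⟩ : Fin k):ℕ) + k - v = (l:ℕ) := by
        show (v + (l:ℕ) - k) + k - v = (l:ℕ); omega
      rw [h2, ext1_apply] at h1
      exact h1
    rw [Matrix.rank, LinearMap.finrank_range_of_inj hinj, Module.finrank_fin_fun]
    omega

/-- Evaluation of the sum of corner ranks. -/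
lemma sum_min_eq (k : ℕ) :
    ∑ i : Fin (2*k), min ((i:ℕ) + 1) (2*k - (i:ℕ)) = k * (k + 1) := by
  rw [Fin.sum_univ_eq_sum_range (fun v => min (v + 1) (2*k - v))]
  rw [Finset.range_eq_Ico, ← Finset.sum_Ico_consecutive _ (Nat.zero_le k) (by omega : k ≤ 2*k)]
  have hS : ∀ n : ℕ, ∑ v ∈ Finset.range n, (v + 1) = ∑ v ∈ Finset.range (n+1), v := by
    intro n
    rw [Finset.sum_range_succ' (fun i => i) n]
    simp
  have h1 : ∑ v ∈ Finset.Ico 0 k, min (v + 1) (2*k - v) = ∑ v ∈ Finset.range (k+1), v := by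
    rw [← Finset.range_eq_Ico, ← hS k]
    refine Finset.sum_congr rfl fun v hv => ?_
    rw [Finset.mem_range] at hv
    omega
  have h2 : ∑ v ∈ Finset.Ico k (2*k), min (v + 1) (2*k - v)
      = ∑ v ∈ Finset.range (k+1), v := by
    rw [Finset.sum_Ico_eq_sum_range, show 2*k - k = k by omega]
    have hc : ∀ w ∈ Finset.range k, min (k + w + 1) (2*k - (k + w)) = (k - 1 - w) + 1 := by
      intro w hw
      rw [Finset.mem_range] at hw
      omega
    rw [Finset.sum_congr rfl hc, Finset.sum_range_reflect (fun j => j + 1) k, hS k]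
  rw [h1, h2]
  have hg := Finset.sum_range_id_mul_two (k+1)
  simp only [Nat.add_sub_cancel] at hg
  have : (k+1) * k = k * (k+1) := Nat.mul_comm _ _
  linarith

end Aux

/-- Odd case `n + 1 = 2k + 1`: if `K` admits a field extension `F` of degree `k`, then
there is a flag rank metric code `C ≤ U^n(K)` of dimension `k` all of whose nonzero
elements have flag rank exactly `k(k+1)` (so with minimum distance `k(k+1)`). -/
theorem exists_maxdist_code_odd {K : Type*} [Field K] (k : ℕ) (hk : 1 ≤ k)
    (F : Type*) [Field F] [Algebra K F] (hF : Module.finrank K F = k) :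
    ∃ C : Submodule K (Matrix (Fin (2 * k)) (Fin (2 * k)) K),
      C ≤ UT K (2 * k) ∧ Module.finrank K ↥C = k ∧
        ∀ Δ ∈ C, Δ ≠ 0 → frk Δ = k * (k + 1) := by
  have hfd : FiniteDimensional K F := FiniteDimensional.of_finrank_pos (by omega)
  let b : Module.Basis (Fin k) K F := (Module.finBasis K F).reindex (finCongr hF)
  let L : F →ₗ[K] Matrix (Fin (2*k)) (Fin (2*k)) K :=
    (embTR K k).comp (Algebra.leftMulMatrix b).toLinearMap
  have hLinj : Function.Injective L :=
    (embTR_injective k).comp (Algebra.leftMulMatrix_injective b)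
  refine ⟨LinearMap.range L, ?_, ?_, ?_⟩
  · rintro _ ⟨x, rfl⟩
    intro i j hij
    show embTR K k (Algebra.leftMulMatrix b x) i j = 0
    rw [embTR_apply, dif_neg (by omega)]
  · rw [LinearMap.finrank_range_of_inj hLinj, hF]
  · rintro _ ⟨x, rfl⟩ hne
    have hx : x ≠ 0 := by
      rintro rfl
      exact hne (by simp [L])
    have hMu : IsUnit (Algebra.leftMulMatrix b x) :=
      (IsUnit.mk0 x hx).map (Algebra.leftMulMatrix b)
    show frk (embTR K k (Algebra.leftMulMatrix b x)) = k * (k+1)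
    unfold frk
    rw [Finset.sum_congr rfl (fun i _ => corner_embTR_rank k _ hMu i)]
    exact sum_min_eq k
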